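/- Let M and B be real symmetric n×n matrices with M positive definite, let μ > 0, c_B ∈ (0, 1/2], and γ ∈ (1/2, 1], and assume the quadratic-form bounds 2μ c_B · xᵀMx ≤ xᵀBx ≤ μ · xᵀMx for all x ∈ ℝⁿ. Define r(φ) := γφ − (1/(2μ)) M⁻¹Bφ. Then for all φ ∈ ℝⁿ: (γ − 1/2)·√(φᵀMφ) ≤ √(r(φ)ᵀ M r(φ)) ≤ √(5/2)·√(φᵀMφ). In particular the M-norms of r(φ) and φ are equivalent. -/

import Mathlib

open scoped Matrix

lemma symm_dot {n : ℕ} {A : Matrix (Fin n) (Fin n) ℝ} (hA : A.IsSymm)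
    (x y : Fin n → ℝ) : y ⬝ᵥ A.mulVec x = x ⬝ᵥ A.mulVec y := by
  rw [Matrix.dotProduct_mulVec, ← Matrix.mulVec_transpose, hA.eq, dotProduct_comm]

lemma cs_psd {n : ℕ} {A : Matrix (Fin n) (Fin n) ℝ} (hA : A.IsSymm)
    (hpos : ∀ x : Fin n → ℝ, 0 ≤ x ⬝ᵥ A.mulVec x) (x y : Fin n → ℝ) :
    (x ⬝ᵥ A.mulVec y) ^ 2 ≤ (x ⬝ᵥ A.mulVec x) * (y ⬝ᵥ A.mulVec y) := by
  have key : ∀ t : ℝ, 0 ≤ (y ⬝ᵥ A.mulVec y) * (t * t) + (2 * (x ⬝ᵥ A.mulVec y)) * t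
      + (x ⬝ᵥ A.mulVec x) := by
    intro t
    have h := hpos (x + t • y)
    have hyx := symm_dot hA x y
    simp only [Matrix.mulVec_add, Matrix.mulVec_smul, add_dotProduct,
      dotProduct_add, smul_dotProduct, dotProduct_smul,
      smul_eq_mul] at h
    rw [hyx] at h
    nlinarith [h]
  have hd := discrim_le_zero key
  rw [discrim] at hd
  nlinarith [hd]


lemma lower_aux (μ γ m b q ν : ℝ) (hμ : 0 < μ) (hγ1 : 1/2 < γ)
    (hm : 0 < m) (hb0 : 0 ≤ b) (hbhigh : b ≤ μ * m) (hcs : b ^ 2 ≤ m * q)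
    (hν0 : 0 < ν) (hνμ : 2 * μ * ν = 1) :
    (γ - 1/2) ^ 2 * m ≤ γ ^ 2 * m - 2 * γ * ν * b + ν ^ 2 * q := by
  have h1 : 0 ≤ m / 2 - ν * b := by nlinarith
  have h2 : 0 ≤ (2 * γ - 1/2) * m - ν * b := by nlinarith
  have hfac : 0 ≤ (m / 2 - ν * b) * ((2 * γ - 1/2) * m - ν * b) := mul_nonneg h1 h2
  have hkey : (γ - 1/2) ^ 2 * m * m ≤ (γ ^ 2 * m - 2 * γ * ν * b + ν ^ 2 * q) * m := by
    nlinarith [hfac, hcs, sq_nonneg ν, mul_pos hν0 hν0]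
  exact le_of_mul_le_mul_right hkey hm

lemma upper_aux (μ γ m b q ν : ℝ) (hμ : 0 < μ) (hγ1 : 1/2 < γ) (hγ2 : γ ≤ 1)
    (hm : 0 ≤ m) (hb0 : 0 ≤ b) (hq0 : 0 ≤ q) (hqb : q ≤ μ * b)
    (hν0 : 0 < ν) (hνμ : 2 * μ * ν = 1) :
    γ ^ 2 * m - 2 * γ * ν * b + ν ^ 2 * q ≤ 5 / 2 * m := by
  have hμν : μ * ν = 1/2 := by linarith
  have h1 : ν^2 * q ≤ ν^2 * (μ*b) := by nlinarith [sq_nonneg ν]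
  have h2 : ν^2 * (μ*b) = (ν*b)/2 := by
    rw [show ν^2*(μ*b) = (μ*ν)*(ν*b) by ring, hμν]; ring
  have h3 : ν*b ≤ 2*γ*ν*b := by nlinarith [mul_nonneg hν0.le hb0]
  have h4 : γ^2*m ≤ m := by nlinarith [mul_nonneg (mul_nonneg (sub_nonneg.2 hγ2) hm) (by linarith : (0:ℝ) ≤ 1 + γ)]
  linarith [mul_nonneg hν0.le hb0]

theorem stmt_4
    {n : ℕ} (M B : Matrix (Fin n) (Fin n) ℝ)
    (hM : M.IsSymm) (hB : B.IsSymm) (hMpd : M.PosDef)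
    (μ c_B γ : ℝ) (hμ : 0 < μ) (hcB : 0 < c_B ∧ c_B ≤ 1 / 2)
    (hγ : 1 / 2 < γ ∧ γ ≤ 1)
    (hlow : ∀ x : Fin n → ℝ, 2 * μ * c_B * (x ⬝ᵥ M.mulVec x) ≤ x ⬝ᵥ B.mulVec x)
    (hhigh : ∀ x : Fin n → ℝ, x ⬝ᵥ B.mulVec x ≤ μ * (x ⬝ᵥ M.mulVec x))
    (r : (Fin n → ℝ) → (Fin n → ℝ))
    (hr : ∀ φ : Fin n → ℝ, r φ = γ • φ - (1 / (2 * μ)) • (M⁻¹ * B).mulVec φ) :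
    ∀ φ : Fin n → ℝ,
      (γ - 1 / 2) * Real.sqrt (φ ⬝ᵥ M.mulVec φ) ≤
          Real.sqrt (r φ ⬝ᵥ M.mulVec (r φ)) ∧
        Real.sqrt (r φ ⬝ᵥ M.mulVec (r φ)) ≤
          Real.sqrt (5 / 2) * Real.sqrt (φ ⬝ᵥ M.mulVec φ) := by
  intro φ
  obtain ⟨hcB1, hcB2⟩ := hcB
  obtain ⟨hγ1, hγ2⟩ := hγ
  -- basic positivity facts
  have hMpsd : ∀ x : Fin n → ℝ, 0 ≤ x ⬝ᵥ M.mulVec x := fun x => by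
    simpa using hMpd.posSemidef.dotProduct_mulVec_nonneg x
  have hBpsd : ∀ x : Fin n → ℝ, 0 ≤ x ⬝ᵥ B.mulVec x := fun x => by
    have := hlow x
    nlinarith [hMpsd x, hlow x, mul_pos hμ hcB1]
  set y : Fin n → ℝ := (M⁻¹ * B).mulVec φ with hy
  set m : ℝ := φ ⬝ᵥ M.mulVec φ with hmdef
  set b : ℝ := φ ⬝ᵥ B.mulVec φ with hbdef
  set q : ℝ := y ⬝ᵥ M.mulVec y with hqdef
  have hdet : IsUnit M.det := (hMpd.det_pos.ne').isUnit
  have hMy : M.mulVec y = B.mulVec φ := by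
    rw [hy, Matrix.mulVec_mulVec, ← Matrix.mul_assoc, Matrix.mul_nonsing_inv M hdet,
      Matrix.one_mul]
  have hm0 : 0 ≤ m := hMpsd φ
  have hb0 : 0 ≤ b := hBpsd φ
  have hq0 : 0 ≤ q := hMpsd y
  have hblow : 2 * μ * c_B * m ≤ b := hlow φ
  have hbhigh : b ≤ μ * m := hhigh φ
  have hφMy : φ ⬝ᵥ M.mulVec y = b := by rw [hMy]
  have hyMφ : y ⬝ᵥ M.mulVec φ = b := by rw [symm_dot hM φ y, hφMy]
  -- Cauchy-Schwarz in M : b² ≤ m q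
  have hcs1 : b ^ 2 ≤ m * q := by
    have := cs_psd hM hMpsd φ y
    rwa [hφMy] at this
  -- q ≤ μ b
  have hyBφ : y ⬝ᵥ B.mulVec φ = q := by rw [← hMy, hqdef]
  have hqb : q ≤ μ * b := by
    have hcs2 := cs_psd hB hBpsd y φ
    have hφBy : y ⬝ᵥ B.mulVec φ = φ ⬝ᵥ B.mulVec y := symm_dot hB φ y
    rw [hyBφ] at hcs2
    have hyBy : y ⬝ᵥ B.mulVec y ≤ μ * q := hhigh y
    rcases eq_or_lt_of_le hq0 with h | h
    · nlinarith
    · nlinarith [mul_le_mul_of_nonneg_right hyBy hb0]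
  have hφBy : φ ⬝ᵥ B.mulVec y = q := by rw [← symm_dot hB φ y, hyBφ]
  -- expand the quadratic form of r φ
  set ν : ℝ := 1 / (2 * μ) with hν
  have hν0 : 0 < ν := by positivity
  have hνμ : 2 * μ * ν = 1 := by rw [hν]; field_simp
  have hval : r φ ⬝ᵥ M.mulVec (r φ) = γ ^ 2 * m - 2 * γ * ν * b + ν ^ 2 * q := by
    rw [hr φ, ← hy]
    simp only [Matrix.mulVec_sub, Matrix.mulVec_smul, sub_dotProduct,
      dotProduct_sub, smul_dotProduct, dotProduct_smul,
      smul_eq_mul]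
    rw [hφMy, hyMφ]
    rw [← hmdef, ← hqdef]
    ring
  -- scalar bounds
  have hlower : (γ - 1 / 2) ^ 2 * m ≤ γ ^ 2 * m - 2 * γ * ν * b + ν ^ 2 * q := by
    rcases eq_or_lt_of_le hm0 with h | hm
    · have hb' : b = 0 := le_antisymm (by rw [← h] at hbhigh; simpa using hbhigh) hb0
      have hq' : q = 0 := le_antisymm (by rw [hb'] at hqb; simpa using hqb) hq0
      rw [← h, hb', hq']; simp
    · exact lower_aux μ γ m b q ν hμ hγ1 hm hb0 hbhigh hcs1 hν0 hνμ

  have hupper : γ ^ 2 * m - 2 * γ * ν * b + ν ^ 2 * q ≤ 5 / 2 * m :=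
    upper_aux μ γ m b q ν hμ hγ1 hγ2 hm0 hb0 hq0 hqb hν0 hνμ
  constructor
  · have h1 : (γ - 1 / 2) * Real.sqrt m = Real.sqrt ((γ - 1 / 2) ^ 2 * m) := by
      rw [Real.sqrt_mul (sq_nonneg _), Real.sqrt_sq (by linarith : (0:ℝ) ≤ γ - 1/2)]
    rw [h1, hval]
    exact Real.sqrt_le_sqrt hlower
  · have h2 : Real.sqrt (5 / 2) * Real.sqrt m = Real.sqrt (5 / 2 * m) := by
      rw [Real.sqrt_mul (by norm_num : (0:ℝ) ≤ 5/2)]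
    rw [h2, hval]
    exact Real.sqrt_le_sqrt hupper
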